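/- For the Marčenko–Pastur law F_y with 0 < y ≤ 1 and a = (1-√y)², the function g(v) = 2v/(y(√a + √v)) is a modulus of continuity: sup_x |F_y(x + θ) - F_y(x)| ≤ 2θ/(y(√a + √θ)) for all θ > 0. -/

import Mathlib

open MeasureTheory

/-- The density of the Marčenko–Pastur law with ratio index `y` (σ² = 1). -/
noncomputable def mpDensity (y x : ℝ) : ℝ :=
  if (1 - Real.sqrt y) ^ 2 ≤ x ∧ x ≤ (1 + Real.sqrt y) ^ 2 then
    Real.sqrt (((1 + Real.sqrt y) ^ 2 - x) * (x - (1 - Real.sqrt y) ^ 2)) /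
      (2 * Real.pi * x * y)
  else 0

/-- The distribution function of the Marčenko–Pastur law with index `y ≤ 1`. -/
noncomputable def mpCdf (y x : ℝ) : ℝ := ∫ t in Set.Iic x, mpDensity y t

open Set

lemma rpow_neg_half (s : ℝ) : s ^ (-(1/2) : ℝ) = 1 / Real.sqrt s := by
  rcases lt_or_ge s 0 with h | h
  · rw [Real.rpow_def_of_neg h, Real.sqrt_eq_zero'.2 h.le]
    have : Real.cos (2⁻¹ * Real.pi) = 0 := by
      rw [show (2⁻¹ * Real.pi : ℝ) = Real.pi / 2 by ring, Real.cos_pi_div_two]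
    simp [this]
  · rw [Real.rpow_neg h, Real.sqrt_eq_rpow, one_div]
    norm_num

lemma mpDensity_nonneg (y t : ℝ) (hy : 0 ≤ y) : 0 ≤ mpDensity y t := by
  unfold mpDensity
  split_ifs with h
  · apply div_nonneg (Real.sqrt_nonneg _)
    have ht : 0 ≤ t := le_trans (sq_nonneg _) h.1
    positivity
  · exact le_refl _

lemma mpDensity_eq_zero (y t : ℝ) (ht : t ≤ (1 - Real.sqrt y) ^ 2) :
    mpDensity y t = 0 := by
  unfold mpDensity
  split_ifs with h
  · have : t = (1 - Real.sqrt y) ^ 2 := le_antisymm ht h.1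
    simp [this]
  · rfl

lemma mpDensity_measurable (y : ℝ) : Measurable (mpDensity y) := by
  unfold mpDensity
  refine Measurable.ite ?_ ?_ measurable_const
  · exact (measurableSet_Icc (a := (1 - Real.sqrt y) ^ 2) (b := (1 + Real.sqrt y) ^ 2))
  · apply Measurable.div
    · fun_prop
    · fun_prop

lemma mpDensity_le_rpow (y : ℝ) (hy0 : 0 < y) (t : ℝ)
    (ht : (1 - Real.sqrt y) ^ 2 ≤ t) :
    mpDensity y t ≤ (Real.sqrt (Real.sqrt y) / (Real.pi * y)) *
      (t - (1 - Real.sqrt y) ^ 2) ^ (-(1/2) : ℝ) := by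
  set s := Real.sqrt y with hs
  set A := (1 - s) ^ 2 with hA
  set B := (1 + s) ^ 2 with hB
  have hs0 : 0 ≤ s := Real.sqrt_nonneg y
  have hpi := Real.pi_pos
  rcases eq_or_lt_of_le ht with heq | hlt
  · rw [mpDensity_eq_zero y t heq.symm.le, ← heq, sub_self,
      Real.zero_rpow (by norm_num), mul_zero]
  have htA : 0 < t - A := sub_pos.2 hlt
  have ht0 : 0 < t := lt_of_le_of_lt (sq_nonneg _) hlt
  have hsqpos : 0 < Real.sqrt (t - A) := Real.sqrt_pos.2 htA
  have hms : Real.sqrt (t - A) * Real.sqrt (t - A) = t - A := Real.mul_self_sqrt htA.le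
  unfold mpDensity
  rw [← hs, ← hA, ← hB]
  split_ifs with h
  · have hBt : Real.sqrt (B - t) ≤ 2 * Real.sqrt s := by
      have h4 : B - A = 4 * s := by rw [hA, hB]; ring
      calc Real.sqrt (B - t) ≤ Real.sqrt (4 * s) := Real.sqrt_le_sqrt (by linarith)
        _ = 2 * Real.sqrt s := by
            rw [show (4 : ℝ) * s = 2 ^ 2 * s by norm_num,
              Real.sqrt_mul (by positivity), Real.sqrt_sq (by norm_num)]
    rw [Real.sqrt_mul (sub_nonneg.2 h.2), rpow_neg_half,
      div_le_iff₀ (by positivity : (0:ℝ) < 2 * Real.pi * t * y)]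
    have hRHS : Real.sqrt s / (Real.pi * y) * (1 / Real.sqrt (t - A)) *
        (2 * Real.pi * t * y) = 2 * t * Real.sqrt s / Real.sqrt (t - A) := by
      field_simp
    rw [hRHS, le_div_iff₀ hsqpos]
    have h1 : Real.sqrt (B - t) * (t - A) ≤ 2 * Real.sqrt s * (t - A) :=
      mul_le_mul_of_nonneg_right hBt htA.le
    have h2 : 2 * Real.sqrt s * (t - A) ≤ 2 * Real.sqrt s * t := by
      have : t - A ≤ t := by nlinarith [sq_nonneg (1 - s)]
      nlinarith [Real.sqrt_nonneg s]
    nlinarith [h1, h2, hms, Real.sqrt_nonneg (B - t)]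
  · have : (0:ℝ) < (t - A) ^ (-(1/2) : ℝ) := Real.rpow_pos_of_pos htA _
    positivity

lemma mpDensity_integrable (y : ℝ) (hy0 : 0 < y) : Integrable (mpDensity y) := by
  set s := Real.sqrt y with hs
  set A := (1 - s) ^ 2 with hA
  set B := (1 + s) ^ 2 with hB
  set C := Real.sqrt s / (Real.pi * y) with hC
  have hs0 : 0 ≤ s := Real.sqrt_nonneg y
  have hAB : A ≤ B := by nlinarith
  have hsupp : Function.support (mpDensity y) ⊆ Icc A B := by
    intro t htmem
    simp only [Function.mem_support] at htmem
    by_contra hmem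
    apply htmem
    unfold mpDensity
    rw [← hs, ← hA, ← hB, if_neg]
    exact fun hc => hmem (mem_Icc.mpr hc)
  rw [← integrableOn_iff_integrable_of_support_subset hsupp,
    integrableOn_Icc_iff_integrableOn_Ioc]
  have hg : IntervalIntegrable (fun t => C * (t - A) ^ (-(1/2) : ℝ)) volume A B := by
    have h1 : IntervalIntegrable (fun x : ℝ => x ^ (-(1/2) : ℝ)) volume (A - A) (B - A) :=
      intervalIntegral.intervalIntegrable_rpow' (by norm_num)
    have h2 := (h1.comp_sub_right A).const_mul C
    simpa using h2
  have hgi : IntegrableOn (fun t => C * (t - A) ^ (-(1/2) : ℝ)) (Ioc A B) :=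
    (intervalIntegrable_iff_integrableOn_Ioc_of_le hAB).1 hg
  refine hgi.mono' ((mpDensity_measurable y).aestronglyMeasurable.restrict) ?_
  refine (ae_restrict_iff' measurableSet_Ioc).2 (Filter.Eventually.of_forall fun t ht => ?_)
  rw [Real.norm_of_nonneg (mpDensity_nonneg _ _ hy0.le)]
  exact mpDensity_le_rpow y hy0 t ht.1.le

set_option maxHeartbeats 1000000 in
/-- Modulus of continuity for the Marčenko–Pastur law `F_y` with `0 < y ≤ 1`
and `a = (1-√y)²`: `sup_x |F_y(x+θ) - F_y(x)| ≤ 2θ/(y(√a + √θ))` for `θ > 0`. -/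
theorem mp_cdf_modulus_of_continuity (y : ℝ) (hy0 : 0 < y) (hy1 : y ≤ 1)
    (θ : ℝ) (hθ : 0 < θ) :
    ∀ x : ℝ, |mpCdf y (x + θ) - mpCdf y x| ≤
      2 * θ / (y * (Real.sqrt ((1 - Real.sqrt y) ^ 2) + Real.sqrt θ)) := by
  intro x
  set s := Real.sqrt y with hs
  set A := (1 - s) ^ 2 with hA
  set C := Real.sqrt s / (Real.pi * y) with hC
  have hs0 : 0 ≤ s := Real.sqrt_nonneg y
  have hs1 : Real.sqrt s ≤ 1 := Real.sqrt_le_one.2 (Real.sqrt_le_one.2 hy1)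
  have hpi := Real.pi_gt_three
  have hInt := mpDensity_integrable y hy0
  have hST : 0 < Real.sqrt θ := Real.sqrt_pos.2 hθ
  have hSA : 0 ≤ Real.sqrt A := Real.sqrt_nonneg A
  have hdiff : mpCdf y (x + θ) - mpCdf y x = ∫ t in x..(x + θ), mpDensity y t := by
    unfold mpCdf
    exact intervalIntegral.integral_Iic_sub_Iic hInt.integrableOn hInt.integrableOn
  have hnn : 0 ≤ ∫ t in x..(x + θ), mpDensity y t :=
    intervalIntegral.integral_nonneg (by linarith) fun t _ => mpDensity_nonneg y t hy0.le
  rw [hdiff, abs_of_nonneg hnn]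
  have hyST : 0 < y * (Real.sqrt A + Real.sqrt θ) := by positivity
  by_cases hcase : A < θ
  · -- case A < θ
    obtain ⟨u, hu⟩ : ∃ u : ℝ, u = max x A := ⟨_, rfl⟩
    obtain ⟨v, hv⟩ : ∃ v : ℝ, v = max (x + θ) A := ⟨_, rfl⟩
    have huA : A ≤ u := hu ▸ le_max_right _ _
    have huv : u ≤ v := by rw [hu, hv]; exact max_le_max (by linarith) le_rfl
    have hvu : v - u ≤ θ := by
      have h1 : v ≤ u + θ := by
        rw [hu, hv]
        exact max_le (by linarith [le_max_left x A]) (by linarith [le_max_right x A])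
      linarith
    have hgi : IntervalIntegrable (fun t => C * (t - A) ^ (-(1/2) : ℝ)) volume u v := by
      have h1 : IntervalIntegrable (fun z : ℝ => z ^ (-(1/2) : ℝ)) volume (u - A) (v - A) :=
        intervalIntegral.intervalIntegrable_rpow' (by norm_num)
      have h2 := (h1.comp_sub_right A).const_mul C
      simpa using h2
    have hstep1 : (∫ t in x..(x + θ), mpDensity y t) = ∫ t in u..v, mpDensity y t := by
      rw [intervalIntegral.integral_of_le (by linarith), intervalIntegral.integral_of_le huv]
      have hind : mpDensity y = (Ioi A).indicator (mpDensity y) := by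
        ext t
        rcases le_or_gt t A with h | h
        · rw [indicator_of_notMem (by simpa using not_lt.2 h), mpDensity_eq_zero y t h]
        · exact (indicator_of_mem (mem_Ioi.mpr h) _).symm
      have hseteq : Ioc x (x + θ) ∩ Ioi A = Ioc u v := by
        ext t
        simp only [mem_inter_iff, mem_Ioc, mem_Ioi, hu, hv]
        constructor
        · rintro ⟨⟨h1, h2⟩, h3⟩
          exact ⟨max_lt h1 h3, le_trans h2 (le_max_left _ _)⟩
        · rintro ⟨h1, h2⟩
          have hxt : x < t := lt_of_le_of_lt (le_max_left x A) h1
          have hAt : A < t := lt_of_le_of_lt (le_max_right x A) h1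
          refine ⟨⟨hxt, ?_⟩, hAt⟩
          rcases le_total (x + θ) A with hc | hc
          · rw [max_eq_right hc] at h2; linarith
          · rwa [max_eq_left hc] at h2
      calc ∫ t in Ioc x (x + θ), mpDensity y t
          = ∫ t in Ioc x (x + θ), (Ioi A).indicator (mpDensity y) t := by rw [← hind]
        _ = ∫ t in Ioc x (x + θ) ∩ Ioi A, mpDensity y t := setIntegral_indicator measurableSet_Ioi
        _ = ∫ t in Ioc u v, mpDensity y t := by rw [hseteq]
    have hstep2 : (∫ t in u..v, mpDensity y t) ≤ ∫ t in u..v, C * (t - A) ^ (-(1/2) : ℝ) :=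
      intervalIntegral.integral_mono_on huv (hInt.intervalIntegrable) hgi
        fun t ht => mpDensity_le_rpow y hy0 t (le_trans huA ht.1)
    have hstep3 : (∫ t in u..v, C * (t - A) ^ (-(1/2) : ℝ))
        = C * ((Real.sqrt (v - A) - Real.sqrt (u - A)) / (1/2)) := by
      rw [intervalIntegral.integral_const_mul]
      have hcs := intervalIntegral.integral_comp_sub_right
        (a := u) (b := v) (fun z : ℝ => z ^ (-(1/2) : ℝ)) A
      rw [hcs, integral_rpow (Or.inl (by norm_num)),
        show (-(1/2) + 1 : ℝ) = 1/2 by norm_num, ← Real.sqrt_eq_rpow, ← Real.sqrt_eq_rpow]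
    have hsub : Real.sqrt (v - A) - Real.sqrt (u - A) ≤ Real.sqrt θ := by
      have hp : 0 ≤ u - A := sub_nonneg.2 huA
      have hle : v - A ≤ (u - A) + θ := by linarith
      have hsq : (u - A) + θ ≤ (Real.sqrt (u - A) + Real.sqrt θ) ^ 2 := by
        nlinarith [Real.sq_sqrt hp, Real.sq_sqrt hθ.le, Real.sqrt_nonneg (u - A), hST]
      have h2 := calc Real.sqrt (v - A)
            ≤ Real.sqrt ((Real.sqrt (u - A) + Real.sqrt θ) ^ 2) :=
              Real.sqrt_le_sqrt (le_trans hle hsq)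
        _ = Real.sqrt (u - A) + Real.sqrt θ := Real.sqrt_sq (by positivity)
      linarith
    have hC0 : 0 ≤ C := by rw [hC]; positivity
    have hstep4 : C * ((Real.sqrt (v - A) - Real.sqrt (u - A)) / (1/2))
        ≤ C * (2 * Real.sqrt θ) := by
      apply mul_le_mul_of_nonneg_left _ hC0
      linarith
    have hstep5 : C * (2 * Real.sqrt θ) ≤ 2 * θ / (y * (Real.sqrt A + Real.sqrt θ)) := by
      rw [hC, div_mul_eq_mul_div, div_le_div_iff₀ (by positivity) hyST]
      have hSAT : Real.sqrt A ≤ Real.sqrt θ := Real.sqrt_le_sqrt hcase.le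
      have hsqθ : Real.sqrt θ ^ 2 = θ := Real.sq_sqrt hθ.le
      nlinarith [mul_nonneg (sub_nonneg.2 hs1)
          (by positivity : (0:ℝ) ≤ 2 * Real.sqrt θ * (y * (Real.sqrt A + Real.sqrt θ))),
        mul_nonneg (sub_nonneg.2 hSAT) (by positivity : (0:ℝ) ≤ 2 * Real.sqrt θ * y),
        mul_nonneg (by linarith : (0:ℝ) ≤ Real.pi - 3) (by positivity : (0:ℝ) ≤ θ * y)]
    calc (∫ t in x..(x + θ), mpDensity y t) = ∫ t in u..v, mpDensity y t := hstep1
      _ ≤ _ := hstep2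
      _ = _ := hstep3
      _ ≤ C * (2 * Real.sqrt θ) := hstep4
      _ ≤ _ := hstep5
  · -- case θ ≤ A
    have hA0 : 0 < A := lt_of_lt_of_le hθ (not_lt.1 hcase)
    have hSA0 : 0 < Real.sqrt A := Real.sqrt_pos.2 hA0
    set D := Real.sqrt s / (2 * Real.pi * y * Real.sqrt A) with hD
    have hpi0 : (0:ℝ) < Real.pi := by linarith
    have hD0 : 0 ≤ D := by rw [hD]; positivity
    have hfD : ∀ t ∈ Icc x (x + θ), mpDensity y t ≤ D := by
      intro t _
      unfold mpDensity
      rw [← hs, ← hA]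
      split_ifs with h
      · rcases eq_or_lt_of_le h.1 with heq | hlt
        · rw [← heq]
          simp [hD0]
        · have htA : 0 < t - A := sub_pos.2 hlt
          have ht0 : 0 < t := lt_of_le_of_lt (sq_nonneg _) hlt
          have hBt : Real.sqrt ((1 + s) ^ 2 - t) ≤ 2 * Real.sqrt s := by
            have h4 : (1 + s) ^ 2 - A = 4 * s := by rw [hA]; ring
            calc Real.sqrt ((1 + s) ^ 2 - t) ≤ Real.sqrt (4 * s) :=
                Real.sqrt_le_sqrt (by linarith)
              _ = 2 * Real.sqrt s := by
                  rw [show (4 : ℝ) * s = 2 ^ 2 * s by norm_num,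
                    Real.sqrt_mul (by positivity), Real.sqrt_sq (by norm_num)]
          have hamgm : 2 * Real.sqrt A * Real.sqrt (t - A) ≤ t := by
            nlinarith [sq_nonneg (Real.sqrt A - Real.sqrt (t - A)),
              Real.sq_sqrt hA0.le, Real.sq_sqrt htA.le]
          rw [Real.sqrt_mul (by linarith [h.2] : (0:ℝ) ≤ (1 + s) ^ 2 - t), hD,
            div_le_div_iff₀ (by positivity) (by positivity)]
          have hkey : Real.sqrt ((1 + s) ^ 2 - t) * Real.sqrt (t - A)
              ≤ 2 * Real.sqrt s * Real.sqrt (t - A) :=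
            mul_le_mul_of_nonneg_right hBt (Real.sqrt_nonneg _)
          have e1 : Real.sqrt ((1 + s) ^ 2 - t) * Real.sqrt (t - A)
                * (2 * Real.pi * y * Real.sqrt A)
              ≤ 2 * Real.sqrt s * Real.sqrt (t - A) * (2 * Real.pi * y * Real.sqrt A) :=
            mul_le_mul_of_nonneg_right hkey (by positivity)
          have e2 : 2 * Real.sqrt s * Real.sqrt (t - A) * (2 * Real.pi * y * Real.sqrt A)
              = (2 * Real.sqrt A * Real.sqrt (t - A)) * (2 * Real.pi * y * Real.sqrt s) := by
            ring
          have e3 : (2 * Real.sqrt A * Real.sqrt (t - A)) * (2 * Real.pi * y * Real.sqrt s)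
              ≤ t * (2 * Real.pi * y * Real.sqrt s) :=
            mul_le_mul_of_nonneg_right hamgm (by positivity)
          have e4 : t * (2 * Real.pi * y * Real.sqrt s)
              = Real.sqrt s * (2 * Real.pi * t * y) := by ring
          linarith
      · exact hD0
    have hmono : (∫ t in x..(x + θ), mpDensity y t) ≤ ∫ _t in x..(x + θ), D :=
      intervalIntegral.integral_mono_on (by linarith) hInt.intervalIntegrable
        intervalIntegrable_const hfD
    have hconst : (∫ _t in x..(x + θ), D) = θ * D := by
      rw [intervalIntegral.integral_const, smul_eq_mul, add_sub_cancel_left]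
    have hfinal : θ * D ≤ 2 * θ / (y * (Real.sqrt A + Real.sqrt θ)) := by
      rw [hD, ← mul_div_assoc, div_le_div_iff₀ (by positivity) hyST]
      have hSAT : Real.sqrt θ ≤ Real.sqrt A := Real.sqrt_le_sqrt (not_lt.1 hcase)
      nlinarith [mul_nonneg (sub_nonneg.2 hs1)
          (by positivity : (0:ℝ) ≤ θ * (y * (Real.sqrt A + Real.sqrt θ))),
        mul_nonneg (sub_nonneg.2 hSAT) (by positivity : (0:ℝ) ≤ θ * y),
        mul_nonneg (by linarith : (0:ℝ) ≤ Real.pi - 3)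
          (by positivity : (0:ℝ) ≤ θ * y * Real.sqrt A)]
    calc (∫ t in x..(x + θ), mpDensity y t) ≤ ∫ _t in x..(x + θ), D := hmono
      _ = θ * D := hconst
      _ ≤ _ := hfinal
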